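/- (Fact 4: Cutoff Relative Order) Let U : ℝ → Fin 3 → ℝ satisfy the single-crossing property in the natural ordering with real cutoffs c₁₂, c₁₃, c₂₃ (no alternative dominated). Then one and only one of the following holds: (i) c₁₂ < c₁₃ < c₂₃, and for every ν ∈ (c₁₂, c₁₃), U ν 2 > U ν 1 and U ν 2 > U ν 3 (alternative 2 is the first best there); (ii) c₁₂ > c₁₃ > c₂₃, and for every ν, U ν 1 > U ν 2 or U ν 3 > U ν 2 (alternative 2 is never the first best); (iii) c₁₂ = c₁₃ = c₂₃, and for every ν ≠ c₁₂, U ν 1 > U ν 2 or U ν 3 > U ν 2, while at ν = c₁₂ there is a three-way tie U ν 1 = U ν 2 = U ν 3. -/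
import Mathlib


/-- Case (i): `c₁₂ < c₁₃ < c₂₃` and alternative 2 (index 1) is the first best on
`(c₁₂, c₁₃)`. -/
def CutoffCaseI (U : ℝ → Fin 3 → ℝ) (c12 c13 c23 : ℝ) : Prop :=
  c12 < c13 ∧ c13 < c23 ∧
    ∀ ν, c12 < ν → ν < c13 → U ν 1 > U ν 0 ∧ U ν 1 > U ν 2

/-- Case (ii): `c₁₂ > c₁₃ > c₂₃` and alternative 2 (index 1) is never the first best. -/
def CutoffCaseII (U : ℝ → Fin 3 → ℝ) (c12 c13 c23 : ℝ) : Prop :=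
  c13 < c12 ∧ c23 < c13 ∧ ∀ ν : ℝ, U ν 0 > U ν 1 ∨ U ν 2 > U ν 1

/-- Case (iii): `c₁₂ = c₁₃ = c₂₃`, alternative 2 (index 1) is strictly worse than
alternative 1 or 3 everywhere except at the common cutoff, where there is a
three-way tie. -/
def CutoffCaseIII (U : ℝ → Fin 3 → ℝ) (c12 c13 c23 : ℝ) : Prop :=
  c12 = c13 ∧ c13 = c23 ∧
    (∀ ν : ℝ, ν ≠ c12 → U ν 0 > U ν 1 ∨ U ν 2 > U ν 1) ∧
    (U c12 0 = U c12 1 ∧ U c12 1 = U c12 2)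

/-- Fact 4 (Cutoff Relative Order): with three alternatives satisfying the
single-crossing property in the natural ordering, one and only one of the three cases
holds. Alternatives 1, 2, 3 are indexed by `0, 1, 2 : Fin 3`. -/
theorem cutoff_relative_order (U : ℝ → Fin 3 → ℝ) (c12 c13 c23 : ℝ)
    (h12 : (∀ ν, ν < c12 → U ν 0 > U ν 1) ∧ U c12 0 = U c12 1 ∧
      (∀ ν, ν > c12 → U ν 0 < U ν 1))
    (h13 : (∀ ν, ν < c13 → U ν 0 > U ν 2) ∧ U c13 0 = U c13 2 ∧
      (∀ ν, ν > c13 → U ν 0 < U ν 2))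
    (h23 : (∀ ν, ν < c23 → U ν 1 > U ν 2) ∧ U c23 1 = U c23 2 ∧
      (∀ ν, ν > c23 → U ν 1 < U ν 2)) :
    (CutoffCaseI U c12 c13 c23 ∨ CutoffCaseII U c12 c13 c23 ∨
        CutoffCaseIII U c12 c13 c23) ∧
      ¬(CutoffCaseI U c12 c13 c23 ∧ CutoffCaseII U c12 c13 c23) ∧
      ¬(CutoffCaseI U c12 c13 c23 ∧ CutoffCaseIII U c12 c13 c23) ∧
      ¬(CutoffCaseII U c12 c13 c23 ∧ CutoffCaseIII U c12 c13 c23) := by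
  obtain ⟨h12a, h12b, h12c⟩ := h12
  obtain ⟨h13a, h13b, h13c⟩ := h13
  obtain ⟨h23a, h23b, h23c⟩ := h23
  refine ⟨?_, ?_, ?_, ?_⟩
  · rcases lt_trichotomy c12 c13 with h | h | h
    · left
      have h23gt : c13 < c23 := by
        rcases lt_trichotomy c13 c23 with h' | h' | h'
        · exact h'
        · exfalso
          have e2 : U c13 1 = U c13 2 := by rw [h']; exact h23b
          have := h12c c13 h
          linarith
        · exfalso
          set ν := (max c12 c23 + c13) / 2 with hν
          have hm : max c12 c23 < c13 := max_lt h h'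
          have hν1 : max c12 c23 < ν := by rw [hν]; linarith
          have hν2 : ν < c13 := by rw [hν]; linarith
          have t1 := h12c ν (lt_of_le_of_lt (le_max_left _ _) hν1)
          have t2 := h13a ν hν2
          have t3 := h23c ν (lt_of_le_of_lt (le_max_right _ _) hν1)
          linarith
      refine ⟨h, h23gt, fun ν h1 h2 => ?_⟩
      have hA := h12c ν h1
      have hB := h13a ν h2
      exact ⟨hA, by linarith⟩
    · right; right
      have e01 := h12b
      have e02 : U c12 0 = U c12 2 := by rw [h]; exact h13b
      have e12 : U c12 1 = U c12 2 := by linarith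
      have hc23 : c23 = c12 := by
        rcases lt_trichotomy c12 c23 with h' | h' | h'
        · have := h23a c12 h'; linarith
        · exact h'.symm
        · have := h23c c12 h'; linarith
      refine ⟨h, by rw [← h, hc23], fun ν hν => ?_, e01, e12⟩
      rcases lt_or_gt_of_ne hν with h' | h'
      · left; exact h12a ν h'
      · right; exact h23c ν (by linarith)
    · right; left
      have hlt : c23 < c13 := by
        rcases lt_trichotomy c23 c13 with h' | h' | h'
        · exact h'
        · exfalso
          have e : U c13 1 = U c13 2 := h' ▸ h23b
          have := h12a c13 h
          linarith [h13b]
        · exfalso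
          set ν := (c13 + min c12 c23) / 2 with hν
          have hm : c13 < min c12 c23 := lt_min h h'
          have hν1 : c13 < ν := by rw [hν]; linarith
          have hν2 : ν < min c12 c23 := by rw [hν]; linarith
          have t1 := h13c ν hν1
          have t2 := h12a ν (lt_of_lt_of_le hν2 (min_le_left _ _))
          have t3 := h23a ν (lt_of_lt_of_le hν2 (min_le_right _ _))
          linarith
      refine ⟨h, hlt, fun ν => ?_⟩
      rcases lt_or_ge ν c12 with h' | h'
      · left; exact h12a ν h'
      · right; exact h23c ν (by linarith)
  · rintro ⟨⟨hI, _⟩, ⟨hII, _⟩⟩; linarith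
  · rintro ⟨⟨hI, _⟩, ⟨hIII, _⟩⟩; linarith
  · rintro ⟨⟨hII, _⟩, ⟨hIII, _⟩⟩; linarith
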